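/- Let x^h : 𝒢^h × [0,T_h) → ℝ² solve the semidiscrete scheme ẍ^h_j + β ẋ^h_j = (2/(q^h_j+q^h_{j+1}))(τ^h_{j+1}−τ^h_j)/h − (ẋ^h_j·θ̇^h_j)θ^h_j with initial velocity ẋ^h_j(0) = V₀(ρ_j) θ^{h,⊥}_j(0). Then ẋ^h_j · θ^h_j = 0 for all j and all t ∈ [0,T_h). -/

import Mathlib

open scoped RealInnerProductSpace
open Set

noncomputable section

abbrev E2 := EuclideanSpace ℝ (Fin 2)

/-- Clockwise rotation through π/2. -/
def rot (v : E2) : E2 := (WithLp.equiv 2 (Fin 2 → ℝ)).symm ![v 1, -v 0]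

lemma inner_rot_self (v : E2) : ⟪rot v, v⟫ = 0 := by
  simp only [rot, PiLp.inner_apply, RCLike.inner_apply, starRingEnd_apply, star_trivial,
    Fin.sum_univ_two, WithLp.equiv_symm_apply, PiLp.toLp_apply, Matrix.cons_val_zero, Matrix.cons_val_one,
    Matrix.head_cons]
  ring

/-- for the semidiscrete scheme
`ẍ^h_j + β ẋ^h_j = (2/(q^h_j+q^h_{j+1}))(τ^h_{j+1}−τ^h_j)/h − (ẋ^h_j·θ̇^h_j)θ^h_j`
with initial velocity `ẋ^h_j(0) = V₀(ρ_j) θ^{h,⊥}_j(0)`, the discrete normal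
parameterization property `ẋ^h_j · θ^h_j = 0` holds for all `j` and `t ∈ [0,T_h)`. -/
theorem semidiscrete_orthogonality
    (J : ℕ) (hJ : 2 ≤ J) (Th β : ℝ) (hTh : 0 < Th) (hβ : 0 ≤ β) (V₀ : ℝ → ℝ)
    (xh xhd xhdd τ θ θd : ℤ → ℝ → E2) (q : ℤ → ℝ → ℝ)
    (hper : ∀ j t, xh (j + J) t = xh j t)
    (hq : ∀ j t, q j t = ‖(J:ℝ) • (xh j t - xh (j-1) t)‖)
    (hqpos : ∀ j, ∀ t ∈ Ico (0:ℝ) Th, 0 < q j t)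
    (hτ : ∀ j t, τ j t = (q j t)⁻¹ • ((J:ℝ) • (xh j t - xh (j-1) t)))
    (hθwell : ∀ j, ∀ t ∈ Ico (0:ℝ) Th, τ j t + τ (j+1) t ≠ 0)
    (hθ : ∀ j t, θ j t = ‖τ j t + τ (j+1) t‖⁻¹ • (τ j t + τ (j+1) t))
    (hxhd : ∀ j t, HasDerivAt (fun t' => xh j t') (xhd j t) t)
    (hxhdd : ∀ j t, HasDerivAt (fun t' => xhd j t') (xhdd j t) t)
    (hθd : ∀ j, ∀ t ∈ Ico (0:ℝ) Th, HasDerivAt (fun t' => θ j t') (θd j t) t)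
    (hscheme : ∀ j, ∀ t ∈ Ico (0:ℝ) Th,
      xhdd j t + β • xhd j t
        = (2 / (q j t + q (j+1) t)) • ((J:ℝ) • (τ (j+1) t - τ j t))
          - ⟪xhd j t, θd j t⟫ • θ j t)
    (hinit : ∀ j, xhd j 0 = V₀ (j * ((1:ℝ)/J)) • rot (θ j 0)) :
    ∀ j, ∀ t ∈ Ico (0:ℝ) Th, ⟪xhd j t, θ j t⟫ = 0 := by
  intro j t ht
  have hτnorm : ∀ k : ℤ, ∀ s ∈ Ico (0:ℝ) Th, ‖τ k s‖ = 1 := by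
    intro k s hs
    rw [hτ, norm_smul, norm_inv, Real.norm_eq_abs, abs_of_pos (hqpos k s hs), ← hq,
      inv_mul_cancel₀ (ne_of_gt (hqpos k s hs))]
  have hθnorm : ∀ s ∈ Ico (0:ℝ) Th, ‖θ j s‖ = 1 := by
    intro s hs
    rw [hθ, norm_smul, norm_inv, norm_norm,
      inv_mul_cancel₀ (norm_ne_zero_iff.2 (hθwell j s hs))]
  set f : ℝ → ℝ := fun s => ⟪xhd j s, θ j s⟫ with hf
  have hfd : ∀ s ∈ Ico (0:ℝ) Th, HasDerivAt f (-β * f s) s := by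
    intro s hs
    have h1 := (hxhd j s).inner ℝ (hθd j s hs)
    -- h1 : HasDerivAt f (⟪xhd j s, θd j s⟫ + ⟪xhdd j s, θ j s⟫) s ?  no:
    -- derivative of fun t => ⟪xhd j t, θ j t⟫; need hxhdd for first factor
    have h2 := (hxhdd j s).inner ℝ (hθd j s hs)
    -- h2 : HasDerivAt (fun t => ⟪xhd j t, θ j t⟫) (⟪xhd j s, θd j s⟫ + ⟪xhdd j s, θ j s⟫) s
    have hxdd : xhdd j s
        = (2 / (q j s + q (j+1) s)) • ((J:ℝ) • (τ (j+1) s - τ j s))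
          - ⟪xhd j s, θd j s⟫ • θ j s - β • xhd j s := by
      have := hscheme j s hs
      linear_combination (norm := module) this
    have hτθ : ⟪τ (j+1) s - τ j s, θ j s⟫ = 0 := by
      have h1' : ⟪τ (j+1) s, τ (j+1) s⟫ = 1 := by
        rw [real_inner_self_eq_norm_sq, hτnorm _ s hs]; norm_num
      have h0' : ⟪τ j s, τ j s⟫ = 1 := by
        rw [real_inner_self_eq_norm_sq, hτnorm _ s hs]; norm_num
      rw [hθ, real_inner_smul_right, inner_sub_left,
        inner_add_right, inner_add_right, h1', h0',
        real_inner_comm (τ j s) (τ (j+1) s)]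
      ring
    have hθθ : ⟪θ j s, θ j s⟫ = 1 := by
      rw [real_inner_self_eq_norm_sq, hθnorm s hs]; norm_num
    refine h2.congr_deriv ?_
    rw [hxdd, inner_sub_left, inner_sub_left, real_inner_smul_left,
      real_inner_smul_left, real_inner_smul_left, hτθ, hθθ, real_inner_smul_left]
    simp only [hf]
    ring
  have hf0 : f 0 = 0 := by
    simp only [hf, hinit j, real_inner_smul_left, inner_rot_self, mul_zero]
  set g : ℝ → ℝ := fun s => Real.exp (β * s) * f s with hg
  have hgd : ∀ s ∈ Ico (0:ℝ) Th, HasDerivAt g 0 s := by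
    intro s hs
    have he : HasDerivAt (fun u : ℝ => Real.exp (β * u)) (Real.exp (β * s) * (β * 1)) s :=
      ((hasDerivAt_id s).const_mul β).exp
    have := he.mul (hfd s hs)
    exact this.congr_deriv (by ring)
  have hsub : Icc (0:ℝ) t ⊆ Ico (0:ℝ) Th := fun u hu => ⟨hu.1, lt_of_le_of_lt hu.2 ht.2⟩
  have hcont : ContinuousOn g (Icc 0 t) := fun u hu =>
    ((hgd u (hsub hu)).continuousAt).continuousWithinAt
  have hconst := constant_of_has_deriv_right_zero hcont
    (fun u hu => (hgd u (hsub (Ico_subset_Icc_self hu))).hasDerivWithinAt)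
  have hgt : g t = g 0 := hconst t (right_mem_Icc.2 ht.1)
  have h0 : g 0 = 0 := by simp [hg, hf0]
  have hft : Real.exp (β * t) * f t = 0 := by rw [← h0]; exact hgt
  have := mul_eq_zero.mp hft
  rcases this with h | h
  · exact absurd h (Real.exp_ne_zero _)
  · exact h
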